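/- Let F be a finite field of odd characteristic with nontrivial additive character τ̂, and let γ(a) = q^{−1/2}Σ_x τ̂(ax²) denote the Weil/Gauss constant for a ∈ Fˣ. Define, for a quadratic extension E = F(√α) (α a non-square), δ(ε) = γ(α·(ε/ε̄)₋) if (ε/ε̄)₋ ≠ 0, and δ(ε) = (the Legendre symbol of ε/ε̄ ∈ {±1}) if (ε/ε̄)₋ = 0, where ε̄ is the conjugate and (ζ)₋ the √α-coefficient of ζ ∈ E. Then the function c(ε,η) defined by: c(ε,η) = 1 if (ε/ε̄)₋·(η/η̄)₋·((εη)/(εη)‾)₋ = 0, and c(ε,η) = γ(α(ε/ε̄)₋)·γ(α(η/η̄)₋)·γ(α((εη)/(εη)‾)₋)⁻¹ otherwise, satisfies c(ε,η) = δ(η)·δ(εη)⁻¹·δ(ε) for all ε,η ∈ Eˣ; in particular c is a 2-coboundary on Eˣ. -/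

import Mathlib

open scoped Classical

private noncomputable def xi (F : Type*) [Field F] [Fintype F] : F → ℂ :=
  fun x => ((quadraticChar F x : ℤ) : ℂ)

private lemma xi_mul {F : Type*} [Field F] [Fintype F] (x y : F) :
    xi F (x * y) = xi F x * xi F y := by
  simp only [xi, map_mul, Int.cast_mul]

private lemma xi_ne_zero {F : Type*} [Field F] [Fintype F] {x : F} (hx : x ≠ 0) :
    xi F x ≠ 0 := by
  simp only [xi, ne_eq, Int.cast_eq_zero, quadraticChar_eq_zero_iff]
  exact hx

private lemma xi_sq {F : Type*} [Field F] [Fintype F] {x : F} (hx : x ≠ 0) :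
    xi F x * xi F x = 1 := by
  have h := quadraticChar_sq_one (F := F) hx
  simp only [xi, ← Int.cast_mul, ← pow_two]
  exact_mod_cast congrArg (fun n : ℤ => (n : ℂ)) h

private lemma gauss_key {F : Type*} [Field F] [Fintype F] (hodd : ringChar F ≠ 2)
    (τ : AddChar F ℂ) (hτ : τ ≠ 1) {a : F} (ha : a ≠ 0) :
    ∑ x : F, τ (a * x ^ 2)
      = xi F a * gaussSum ((quadraticChar F).ringHomComp (Int.castRingHom ℂ)) τ := by
  set χ := (quadraticChar F).ringHomComp (Int.castRingHom ℂ) with hχ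
  have h1 : ∑ x : F, τ (a * x ^ 2) = ∑ j : F, (xi F j + 1) * τ (a * j) := by
    rw [← Finset.sum_fiberwise' Finset.univ (fun x : F => x ^ 2) (fun j => τ (a * j))]
    refine Finset.sum_congr rfl fun j _ => ?_
    rw [Finset.sum_const, nsmul_eq_mul]
    congr 1
    have h2 := quadraticChar_card_sqrts hodd j
    rw [Set.toFinset_setOf] at h2
    have h3 : ((Finset.filter (fun x : F => x ^ 2 = j) Finset.univ).card : ℂ)
        = ((quadraticChar F j : ℤ) : ℂ) + 1 := by exact_mod_cast congrArg (fun n : ℤ => (n : ℂ)) h2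
    simpa [xi] using h3
  rw [h1]
  have h4 : ∀ j : F, (xi F j + 1) * τ (a * j) = χ j * (τ.mulShift a) j + (τ.mulShift a) j := by
    intro j
    simp only [AddChar.mulShift_apply, xi, hχ, MulChar.ringHomComp_apply, eq_intCast]
    ring
  simp only [h4, Finset.sum_add_distrib]
  have h5 : ∑ j : F, (τ.mulShift a) j = 0 := by
    refine AddChar.sum_eq_zero_of_ne_one ?_
    exact (AddChar.IsPrimitive.of_ne_one hτ) ha
  have h6 : ∑ j : F, χ j * (τ.mulShift a) j = gaussSum χ (τ.mulShift a) := rfl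
  rw [h5, h6, add_zero]
  have ha' : IsUnit a := ha.isUnit
  have h7 := gaussSum_mulShift χ τ ha'.unit
  have h9 : χ ↑ha'.unit = χ a := by rw [IsUnit.unit_spec]
  have h10 : xi F a * (χ a * gaussSum χ (AddChar.mulShift τ a)) = xi F a * gaussSum χ τ := by
    rw [← h9, ← (by rw [IsUnit.unit_spec] : AddChar.mulShift τ ↑ha'.unit = AddChar.mulShift τ a),
      h7]
  have h11 : xi F a * χ a = 1 := by
    simp only [hχ, MulChar.ringHomComp_apply, eq_intCast]
    exact xi_sq ha
  calc gaussSum χ (AddChar.mulShift τ a)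
      = (xi F a * χ a) * gaussSum χ (AddChar.mulShift τ a) := by rw [h11, one_mul]
    _ = xi F a * (χ a * gaussSum χ (AddChar.mulShift τ a)) := by ring
    _ = xi F a * gaussSum χ τ := h10

private lemma gauss_sq {F : Type*} [Field F] [Fintype F] (hodd : ringChar F ≠ 2)
    (τ : AddChar F ℂ) (hτ : τ ≠ 1) :
    gaussSum ((quadraticChar F).ringHomComp (Int.castRingHom ℂ)) τ *
      gaussSum ((quadraticChar F).ringHomComp (Int.castRingHom ℂ)) τ
      = xi F (-1) * (Fintype.card F : ℂ) := by
  have hχ1 : (quadraticChar F).ringHomComp (Int.castRingHom ℂ) ≠ 1 :=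
    (MulChar.ringHomComp_ne_one_iff (fun x y h => by simpa using h)).mpr
      (quadraticChar_ne_one hodd)
  have hχ2 := (quadraticChar_isQuadratic F).comp (Int.castRingHom ℂ)
  have hψ := AddChar.IsPrimitive.of_ne_one hτ
  have h := gaussSum_sq hχ1 hχ2 hψ
  rw [pow_two] at h
  rw [h]
  simp [xi, MulChar.ringHomComp_apply]

/-- The explicit 2-cocycle `c(ε,η)` built from normalized Gauss sums on the unit
group of a quadratic extension `E = F(√α)` is the coboundary of the explicit
function `δ` built from Gauss sums and Legendre symbols. -/
theorem gauss_cocycle_is_coboundary {F E : Type*} [Field F] [Fintype F]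
    [Field E] [Algebra F E]
    (hodd : ringChar F ≠ 2)
    (τ : AddChar F ℂ) (hτ : ∃ x : F, τ x ≠ 1)
    (α : F) (hα : ¬ IsSquare α)
    (ω : E) (hω : ω * ω = algebraMap F E α)
    (pl mi : E → F)
    (hrep : ∀ ζ : E, ζ = algebraMap F E (pl ζ) + mi ζ • ω)
    (hind : ∀ a b : F, algebraMap F E a + b • ω = 0 → a = 0 ∧ b = 0)
    (σ : E ≃ₐ[F] E) (hσ : σ ω = -ω) :
    let γ : F → ℂ := fun b =>
      ((Real.sqrt (Fintype.card F) : ℝ) : ℂ)⁻¹ * ∑ x : F, τ (b * x ^ 2)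
    let m : Eˣ → F := fun e => mi ((e : E) / σ e)
    let p : Eˣ → F := fun e => pl ((e : E) / σ e)
    let δ : Eˣ → ℂ := fun e =>
      if m e ≠ 0 then γ (α * m e) else (if IsSquare (p e) then 1 else -1)
    let c : Eˣ → Eˣ → ℂ := fun e h =>
      if m e * m h * m (e * h) = 0 then 1
      else γ (α * m e) * γ (α * m h) * (γ (α * m (e * h)))⁻¹
    ∀ ε η : Eˣ, c ε η = δ η * (δ (ε * η))⁻¹ * δ ε := by
  intro γ m p δ c ε η
  have hτ' : τ ≠ 1 := AddChar.ne_one_iff.mpr hτ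
  have hα0 : α ≠ 0 := fun h => hα (h ▸ ⟨0, by simp⟩)
  -- structure constants of the quadratic extension
  have uniq : ∀ a b a' b' : F, algebraMap F E a + b • ω = algebraMap F E a' + b' • ω →
      a = a' ∧ b = b' := by
    intro a b a' b' h
    have h2 : algebraMap F E (a - a') + (b - b') • ω = 0 := by
      rw [map_sub, sub_smul]
      rw [show algebraMap F E a - algebraMap F E a' + (b • ω - b' • ω)
          = (algebraMap F E a + b • ω) - (algebraMap F E a' + b' • ω) by ring, h, sub_self]
    obtain ⟨h3, h4⟩ := hind _ _ h2
    exact ⟨sub_eq_zero.mp h3, sub_eq_zero.mp h4⟩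
  have hσσ : ∀ x : E, σ (σ x) = x := by
    intro x
    conv_lhs => rw [hrep x]
    conv_rhs => rw [hrep x]
    simp [map_add, map_smul, hσ]
  have expand : ∀ a b a' b' : F,
      (algebraMap F E a + b • ω) * (algebraMap F E a' + b' • ω)
        = algebraMap F E (a * a' + α * (b * b')) + (a * b' + a' * b) • ω := by
    intro a b a' b'
    have h : (algebraMap F E a + b • ω) * (algebraMap F E a' + b' • ω)
        = algebraMap F E (a * a') + algebraMap F E (b * b') * (ω * ω)
          + (a * b' + a' * b) • ω := by
      simp only [Algebra.smul_def, map_add, map_mul]; ring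
    rw [h, hω]
    simp only [map_add, map_mul]
    ring
  have hσrep : ∀ a b : F, σ (algebraMap F E a + b • ω) = algebraMap F E a + (-b) • ω := by
    intro a b
    rw [map_add, AlgEquiv.commutes, map_smul, hσ, smul_neg, neg_smul]
  have hdiv1 : ∀ e : Eˣ, ((e : E) / σ (e : E)) * σ ((e : E) / σ (e : E)) = 1 := by
    intro e
    have h1 : (e : E) ≠ 0 := e.ne_zero
    have h2 : σ (e : E) ≠ 0 := fun h =>
      h1 (σ.injective (h.trans (map_zero (σ : E →+* E)).symm))
    rw [map_div₀, hσσ]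
    field_simp
  have hu : ∀ e : Eˣ, ((e : E) / σ (e : E)) = algebraMap F E (p e) + m e • ω := fun e =>
    hrep _
  have hnorm : ∀ e : Eˣ, p e * p e - α * (m e * m e) = 1 := by
    intro e
    have h1 := hdiv1 e
    rw [hu e, hσrep, expand] at h1
    have h2 : (1 : E) = algebraMap F E (1 : F) + (0 : F) • ω := by simp
    rw [h2] at h1
    obtain ⟨h3, h4⟩ := uniq _ _ _ _ h1
    linear_combination h3
  have hcomp : ∀ a b : Eˣ, p (a * b) = p a * p b + α * (m a * m b) ∧
      m (a * b) = p a * m b + p b * m a := by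
    intro a b
    have h1 : ((↑(a * b) : E) / σ (↑(a * b) : E)) = ((a : E) / σ (a : E)) * ((b : E) / σ (b : E)) := by
      rw [Units.val_mul, map_mul, div_mul_div_comm]
    rw [hu a, hu b, hu (a * b), expand] at h1
    exact uniq _ _ _ _ h1
  -- Gauss sum facts
  set g := gaussSum ((quadraticChar F).ringHomComp (Int.castRingHom ℂ)) τ with hg
  set s : ℂ := ((Real.sqrt (Fintype.card F) : ℝ) : ℂ)⁻¹ * g with hs
  have hγ : ∀ b : F, b ≠ 0 → γ b = xi F b * s := by
    intro b hb
    show ((Real.sqrt (Fintype.card F) : ℝ) : ℂ)⁻¹ * ∑ x : F, τ (b * x ^ 2) = _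
    rw [gauss_key hodd τ hτ' hb, hs]
    ring
  have hq0 : ((Fintype.card F : ℕ) : ℂ) ≠ 0 := Nat.cast_ne_zero.mpr Fintype.card_ne_zero
  have hss : s * s = xi F (-1) := by
    have h1 : ((Real.sqrt (Fintype.card F) : ℝ) : ℂ) * ((Real.sqrt (Fintype.card F) : ℝ) : ℂ)
        = ((Fintype.card F : ℕ) : ℂ) := by
      rw [← Complex.ofReal_mul, Real.mul_self_sqrt (by positivity)]
      norm_num
    have h2 := gauss_sq hodd τ hτ'
    calc s * s
        = (((Real.sqrt (Fintype.card F) : ℝ) : ℂ) * ((Real.sqrt (Fintype.card F) : ℝ) : ℂ))⁻¹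
          * (g * g) := by rw [hs]; ring
      _ = ((Fintype.card F : ℕ) : ℂ)⁻¹ * (xi F (-1) * ((Fintype.card F : ℕ) : ℂ)) := by
          rw [h1, hg, h2]
      _ = xi F (-1) := by field_simp
  have hs0 : s ≠ 0 := by
    intro h
    apply xi_ne_zero (show (-1 : F) ≠ 0 by norm_num)
    rw [← hss, h, mul_zero]
  -- values of δ
  have hδ1 : ∀ e : Eˣ, m e ≠ 0 → δ e = xi F (α * m e) * s := by
    intro e he
    show (if m e ≠ 0 then γ (α * m e) else (if IsSquare (p e) then 1 else -1)) = _
    rw [if_pos he, hγ _ (mul_ne_zero hα0 he)]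
  have hp_sq : ∀ e : Eˣ, m e = 0 → p e * p e = 1 := by
    intro e he
    have h := hnorm e
    rw [he] at h
    linear_combination h
  have hp_ne : ∀ e : Eˣ, m e = 0 → p e ≠ 0 := by
    intro e he h
    have h2 := hp_sq e he
    rw [h, mul_zero] at h2
    exact one_ne_zero h2.symm
  have hδ2 : ∀ e : Eˣ, m e = 0 → δ e = xi F (p e) := by
    intro e he
    show (if m e ≠ 0 then γ (α * m e) else (if IsSquare (p e) then 1 else -1)) = _
    rw [if_neg (by simpa using he)]
    by_cases hsq : IsSquare (p e)
    · rw [if_pos hsq]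
      have h := (quadraticChar_one_iff_isSquare (hp_ne e he)).mpr hsq
      simp [xi, h]
    · rw [if_neg hsq]
      have h := quadraticChar_neg_one_iff_not_isSquare.mpr hsq
      simp [xi, h]
  -- main case analysis
  obtain ⟨hR, hC⟩ := hcomp ε η
  have hQn := hnorm η
  show (if m ε * m η * m (ε * η) = 0 then (1 : ℂ)
      else γ (α * m ε) * γ (α * m η) * (γ (α * m (ε * η)))⁻¹) = δ η * (δ (ε * η))⁻¹ * δ ε
  by_cases hA : m ε = 0
  · rw [if_pos (by rw [hA]; ring)]
    have hP0 : p ε ≠ 0 := hp_ne ε hA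
    by_cases hB : m η = 0
    · have hC0 : m (ε * η) = 0 := by rw [hC, hA, hB]; ring
      rw [hδ2 η hB, hδ2 _ hC0, hδ2 ε hA]
      have hRval : p (ε * η) = p ε * p η := by rw [hR, hA, hB]; ring
      rw [hRval, xi_mul]
      have h1 := xi_ne_zero hP0
      have h2 := xi_ne_zero (hp_ne η hB)
      field_simp
    · have hC0 : m (ε * η) = p ε * m η := by rw [hC, hA]; ring
      have hCne : m (ε * η) ≠ 0 := by rw [hC0]; exact mul_ne_zero hP0 hB
      rw [hδ1 η hB, hδ1 _ hCne, hδ2 ε hA]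
      have h3 : xi F (α * m (ε * η)) = xi F (α * m η) * xi F (p ε) := by
        rw [hC0, show α * (p ε * m η) = (α * m η) * p ε by ring, xi_mul]
      rw [h3]
      have h1 := xi_ne_zero (mul_ne_zero hα0 hB)
      have h2 := xi_ne_zero hP0
      field_simp
  · by_cases hB : m η = 0
    · rw [if_pos (by rw [hB]; ring)]
      have hQ0 : p η ≠ 0 := hp_ne η hB
      have hC0 : m (ε * η) = p η * m ε := by rw [hC, hB]; ring
      have hCne : m (ε * η) ≠ 0 := by rw [hC0]; exact mul_ne_zero hQ0 hA
      rw [hδ2 η hB, hδ1 ε hA, hδ1 _ hCne]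
      have h3 : xi F (α * m (ε * η)) = xi F (α * m ε) * xi F (p η) := by
        rw [hC0, show α * (p η * m ε) = (α * m ε) * p η by ring, xi_mul]
      rw [h3]
      have h1 := xi_ne_zero (mul_ne_zero hα0 hA)
      have h2 := xi_ne_zero hQ0
      field_simp
    · by_cases hC0 : m (ε * η) = 0
      · rw [if_pos (by rw [hC0]; ring)]
        rw [hδ1 ε hA, hδ1 η hB, hδ2 _ hC0]
        have hPB : p ε * m η + p η * m ε = 0 := by rw [← hC, hC0]
        have hkey : -(m ε * m η) * p (ε * η) = m ε * m ε := by
          linear_combination (-(m ε * m η)) * hR + (-(m ε * p η)) * hPB + (m ε * m ε) * hQn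
        have hR0 : p (ε * η) ≠ 0 := hp_ne _ hC0
        have h1 : xi F (-(m ε * m η)) * xi F (p (ε * η)) = 1 := by
          rw [← xi_mul, hkey, xi_mul]
          exact xi_sq hA
        have h2 : xi F (-(m ε * m η)) = (xi F (p (ε * η)))⁻¹ := eq_inv_of_mul_eq_one_left h1
        have hfold : xi F (α * m η) * xi F (α * m ε) * xi F (-1) = xi F (-(m ε * m η)) := by
          rw [← xi_mul, ← xi_mul]
          rw [show α * m η * (α * m ε) * -1 = (α * α) * (-(m ε * m η)) by ring, xi_mul,
            xi_mul, xi_sq hα0, one_mul]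
        have hcalc : xi F (α * m η) * s * (xi F (p (ε * η)))⁻¹ * (xi F (α * m ε) * s)
            = (1 : ℂ) := by
          calc xi F (α * m η) * s * (xi F (p (ε * η)))⁻¹ * (xi F (α * m ε) * s)
              = xi F (α * m η) * xi F (α * m ε) * (s * s) * (xi F (p (ε * η)))⁻¹ := by ring
            _ = xi F (α * m η) * xi F (α * m ε) * xi F (-1) * (xi F (p (ε * η)))⁻¹ := by
                rw [hss]
            _ = xi F (-(m ε * m η)) * (xi F (p (ε * η)))⁻¹ := by rw [hfold]
            _ = (xi F (p (ε * η)))⁻¹ * (xi F (p (ε * η)))⁻¹ := by rw [h2]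
            _ = (xi F (p (ε * η)) * xi F (p (ε * η)))⁻¹ := by rw [mul_inv]
            _ = 1 := by rw [xi_sq hR0, inv_one]
        rw [hcalc]
      · rw [if_neg (mul_ne_zero (mul_ne_zero hA hB) hC0)]
        rw [hδ1 ε hA, hδ1 η hB, hδ1 _ hC0,
          hγ _ (mul_ne_zero hα0 hA), hγ _ (mul_ne_zero hα0 hB), hγ _ (mul_ne_zero hα0 hC0)]
        ring
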